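/- arXiv:2508.07360 — 2 statements merged into one kernel-verified Lean document; each statement's English description precedes it below -/
import Mathlib

section
/- Let p > 1, γ > 0, c > 0, ϑ > 0 and define f(t) = (ϑt/(p−1))^{p−1} · ( c/(−((p−1)/ϑ) ln t)^γ − ϑ ) for t ∈ (0,1). Then f(t) ≥ 0 if and only if e^{−(ϑ/(p−1))(c/ϑ)^{1/γ}} ≤ t < 1, and f is strictly increasing on [e^{−(ϑ/(p−1))(c/ϑ)^{1/γ}}, 1). -/
open Real Set

lemma sign_key (p γ c θ : ℝ) (hp : 1 < p) (hγ : 0 < γ) (hc : 0 < c) (hθ : 0 < θ)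
    (t : ℝ) (ht : t ∈ Ioo (0:ℝ) 1) :
    (0 ≤ c / (-((p - 1) / θ) * Real.log t) ^ γ - θ ↔
      Real.exp (-(θ / (p - 1)) * (c / θ) ^ (1 / γ)) ≤ t) := by
  have hp1 : (0:ℝ) < p - 1 := by linarith
  have hlt : Real.log t < 0 := Real.log_neg ht.1 ht.2
  have hL : 0 < -((p - 1) / θ) * Real.log t := by
    have : 0 < (p - 1) / θ := div_pos hp1 hθ
    nlinarith
  set L := -((p - 1) / θ) * Real.log t with hLdef
  have hLγ : 0 < L ^ γ := Real.rpow_pos_of_pos hL γ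
  have hcθ : 0 < c / θ := div_pos hc hθ
  constructor
  · intro h
    have h1 : θ ≤ c / L ^ γ := by linarith
    have h2 : L ^ γ ≤ c / θ := by
      rw [le_div_iff₀ hθ]
      calc L ^ γ * θ ≤ (c / L ^ γ) * L ^ γ := by nlinarith
        _ = c := by field_simp
    have h3 : L ≤ (c / θ) ^ (1 / γ) := by
      rw [one_div, Real.le_rpow_inv_iff_of_pos hL.le hcθ.le hγ]
      exact h2
    -- translate to t
    rw [← Real.le_log_iff_exp_le ht.1]
    have : -Real.log t ≤ (θ / (p - 1)) * (c / θ) ^ (1 / γ) := by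
      have := mul_le_mul_of_nonneg_left h3 (le_of_lt (div_pos hθ hp1))
      calc -Real.log t = (θ / (p - 1)) * L := by
            rw [hLdef]; field_simp <;> ring
        _ ≤ _ := by
            exact mul_le_mul_of_nonneg_left h3 (le_of_lt (div_pos hθ hp1))
    linarith
  · intro h
    rw [← Real.le_log_iff_exp_le ht.1] at h
    have h3 : L ≤ (c / θ) ^ (1 / γ) := by
      have hK : L = ((p-1)/θ) * (-Real.log t) := by ring
      have h4 : -Real.log t ≤ (θ / (p - 1)) * (c / θ) ^ (1 / γ) := by linarith
      rw [hK]
      calc ((p-1)/θ) * (-Real.log t) ≤ ((p-1)/θ) * ((θ / (p - 1)) * (c / θ) ^ (1 / γ)) :=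
            mul_le_mul_of_nonneg_left h4 (le_of_lt (div_pos hp1 hθ))
        _ = (c / θ) ^ (1 / γ) := by field_simp
    have h2 : L ^ γ ≤ c / θ := by
      rw [one_div, Real.le_rpow_inv_iff_of_pos hL.le hcθ.le hγ] at h3
      exact h3
    have h1 : θ ≤ c / L ^ γ := by
      rw [le_div_iff₀ hLγ]
      rw [le_div_iff₀ hθ] at h2
      nlinarith
    linarith

/-- Sign and monotonicity of `f(t) = (θt/(p-1))^{p-1} (c/(-((p-1)/θ) ln t)^γ - θ)` on (0,1). -/
theorem sign_and_monotonicity (p γ c θ : ℝ) (hp : 1 < p) (hγ : 0 < γ) (hc : 0 < c)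
    (hθ : 0 < θ) (f : ℝ → ℝ)
    (hf : ∀ t ∈ Ioo (0:ℝ) 1,
      f t = (θ * t / (p - 1)) ^ (p - 1) *
        (c / (-((p - 1) / θ) * Real.log t) ^ γ - θ)) :
    (∀ t ∈ Ioo (0:ℝ) 1,
      (0 ≤ f t ↔ Real.exp (-(θ / (p - 1)) * (c / θ) ^ (1 / γ)) ≤ t)) ∧
    StrictMonoOn f (Ico (Real.exp (-(θ / (p - 1)) * (c / θ) ^ (1 / γ))) 1) := by
  have hp1 : (0:ℝ) < p - 1 := by linarith
  have hApos : ∀ t ∈ Ioo (0:ℝ) 1, 0 < (θ * t / (p - 1)) ^ (p - 1) := fun t ht =>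
    Real.rpow_pos_of_pos (div_pos (mul_pos hθ ht.1) hp1) _
  constructor
  · intro t ht
    rw [hf t ht, ← sign_key p γ c θ hp hγ hc hθ t ht]
    exact mul_nonneg_iff_of_pos_left (hApos t ht)
  · intro x hx y hy hxy
    have hx0 : x ∈ Ioo (0:ℝ) 1 := ⟨lt_of_lt_of_le (Real.exp_pos _) hx.1, hx.2⟩
    have hy0 : y ∈ Ioo (0:ℝ) 1 := ⟨lt_of_lt_of_le (Real.exp_pos _) hy.1, hy.2⟩
    rw [hf x hx0, hf y hy0]
    set Lx := -((p - 1) / θ) * Real.log x with hLx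
    set Ly := -((p - 1) / θ) * Real.log y with hLy
    have hpθ : 0 < (p - 1) / θ := div_pos hp1 hθ
    have hLxpos : 0 < Lx := by
      have := Real.log_neg hx0.1 hx0.2; nlinarith
    have hLypos : 0 < Ly := by
      have := Real.log_neg hy0.1 hy0.2; nlinarith
    have hLyLx : Ly < Lx := by
      have : Real.log x < Real.log y := Real.log_lt_log hx0.1 hxy
      nlinarith
    have hBx : 0 ≤ c / Lx ^ γ - θ :=
      (sign_key p γ c θ hp hγ hc hθ x hx0).2 hx.1
    have hBlt : c / Lx ^ γ - θ < c / Ly ^ γ - θ := by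
      have h1 : Ly ^ γ < Lx ^ γ := Real.rpow_lt_rpow hLypos.le hLyLx hγ
      have := div_lt_div_of_pos_left hc (Real.rpow_pos_of_pos hLypos γ) h1
      linarith
    have hAlt : (θ * x / (p - 1)) ^ (p - 1) < (θ * y / (p - 1)) ^ (p - 1) :=
      Real.rpow_lt_rpow (le_of_lt (div_pos (mul_pos hθ hx0.1) hp1))
        (by apply div_lt_div_of_pos_right _ hp1; nlinarith) hp1
    calc (θ * x / (p - 1)) ^ (p - 1) * (c / Lx ^ γ - θ)
        < (θ * x / (p - 1)) ^ (p - 1) * (c / Ly ^ γ - θ) := by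
          exact mul_lt_mul_of_pos_left hBlt (hApos x hx0)
      _ ≤ (θ * y / (p - 1)) ^ (p - 1) * (c / Ly ^ γ - θ) := by
          apply mul_le_mul_of_nonneg_right hAlt.le; linarith
end

section
/- Let p > 1, γ > 1, λ₁ > 0, s > 0 and let φ be a positive C¹ function. Define w = s φ^{p/(γ+p−1)}. Then, pointwise wherever φ > 0 and −Δ_p φ = λ₁ φ^{p−1}, one has −Δ_p w = a/w^γ with a = s^{γ+p−1} (p/(γ+p−1))^{p−1} [ λ₁ φ^p + ((γ−1)(p−1)/(γ+p−1)) |∇φ|^p ]. -/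
open Real

/-- The p-Laplace operator `Δ_p v = div(|∇v|^{p-2} ∇v)`, computed classically. -/
noncomputable def pLaplacian {N : ℕ} (p : ℝ) (v : EuclideanSpace ℝ (Fin N) → ℝ)
    (x : EuclideanSpace ℝ (Fin N)) : ℝ :=
  ∑ i : Fin N,
    fderiv ℝ (fun y => ‖gradient v y‖ ^ (p - 2) * gradient v y i) x
      (EuclideanSpace.single i 1)

open InnerProductSpace in
lemma grad_coord {N : ℕ} (φ : EuclideanSpace ℝ (Fin N) → ℝ)
    (x : EuclideanSpace ℝ (Fin N)) (i : Fin N) :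
    fderiv ℝ φ x (EuclideanSpace.single i 1) = gradient φ x i := by
  have := toDual_symm_apply (𝕜 := ℝ) (E := EuclideanSpace ℝ (Fin N))
    (y := fderiv ℝ φ x) (x := EuclideanSpace.single i 1)
  rw [← this, gradient, EuclideanSpace.inner_single_right]
  simp

open InnerProductSpace in
lemma grad_const_mul_rpow {N : ℕ} (φ : EuclideanSpace ℝ (Fin N) → ℝ)
    (hφ : Differentiable ℝ φ) (hpos : ∀ y, 0 < φ y) (c b : ℝ)
    (x : EuclideanSpace ℝ (Fin N)) :
    gradient (fun y => c * φ y ^ b) x = (c * (b * φ x ^ (b - 1))) • gradient φ x := by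
  have h1 : HasFDerivAt (fun y => c * φ y ^ b)
      (c • (b * φ x ^ (b - 1)) • fderiv ℝ φ x) x :=
    ((hφ x).hasFDerivAt.rpow_const (Or.inl (hpos x).ne')).const_mul c
  rw [gradient, h1.fderiv, map_smul, map_smul, smul_smul, gradient]

open InnerProductSpace in
lemma grad_contDiff {N : ℕ} (φ : EuclideanSpace ℝ (Fin N) → ℝ) (hφ : ContDiff ℝ 2 φ) :
    ContDiff ℝ 1 (fun y => gradient φ y) := by
  have h1 : ContDiff ℝ 1 (fderiv ℝ φ) := hφ.fderiv_right (by norm_num)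
  exact (toDual ℝ (EuclideanSpace ℝ (Fin N))).symm.contDiff.comp h1

lemma norm_rpow_helper {N : ℕ} (p : ℝ) (hp : 1 < p) (v : EuclideanSpace ℝ (Fin N)) :
    ‖v‖ ^ (p - 2) * (‖v‖ ^ (2 : ℕ)) = ‖v‖ ^ p := by
  rcases eq_or_lt_of_le (norm_nonneg v) with h | h
  · rw [← h]
    rw [Real.zero_rpow (show p ≠ 0 by linarith)]
    norm_num
  · rw [← Real.rpow_natCast ‖v‖ 2, ← Real.rpow_add h]
    norm_num

/-- Barrier computation: for `w = s φ^{p/(γ+p-1)}`, with `φ` a positive eigenfunction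
`-Δ_p φ = λ₁ φ^{p-1}`, one has `-Δ_p w = a / w^γ` with the explicit coefficient `a`. -/
theorem barrier_computation {N : ℕ} (p γ lam₁ s : ℝ) (hp : 1 < p) (hγ : 1 < γ)
    (hlam₁ : 0 < lam₁) (hs : 0 < s)
    (φ : EuclideanSpace ℝ (Fin N) → ℝ) (hφ : ContDiff ℝ 2 φ) (hφpos : ∀ y, 0 < φ y)
    (w : EuclideanSpace ℝ (Fin N) → ℝ)
    (hw : ∀ y, w y = s * φ y ^ (p / (γ + p - 1))) :
    ∀ x, -pLaplacian p φ x = lam₁ * φ x ^ (p - 1) →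
      -pLaplacian p w x =
        (s ^ (γ + p - 1) * (p / (γ + p - 1)) ^ (p - 1) *
          (lam₁ * φ x ^ p +
            ((γ - 1) * (p - 1) / (γ + p - 1)) * ‖gradient φ x‖ ^ p)) / w x ^ γ := by
  have hQ : 0 < γ + p - 1 := by linarith
  set β : ℝ := p / (γ + p - 1) with hβdef
  have hβ : 0 < β := div_pos (by linarith) hQ
  obtain rfl : w = fun y => s * φ y ^ β := funext hw
  have hφd : Differentiable ℝ φ := hφ.differentiable (by norm_num)
  intro x hx
  set m : ℝ := (β - 1) * (p - 1) with hm
  set C : ℝ := (s * β) ^ (p - 1) with hC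
  set A : EuclideanSpace ℝ (Fin N) → ℝ := fun y => C * φ y ^ m with hA
  set g : Fin N → EuclideanSpace ℝ (Fin N) → ℝ :=
    fun i y => ‖gradient φ y‖ ^ (p - 2) * gradient φ y i with hg
  -- gradient of w
  have hgw : ∀ y, gradient (fun z => s * φ z ^ β) y
      = (s * (β * φ y ^ (β - 1))) • gradient φ y :=
    fun y => grad_const_mul_rpow φ hφd hφpos s β y
  have hcpos : ∀ y, 0 < s * (β * φ y ^ (β - 1)) := fun y =>
    mul_pos hs (mul_pos hβ (rpow_pos_of_pos (hφpos y) _))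
  have hApos : ∀ y, 0 < A y := fun y =>
    mul_pos (rpow_pos_of_pos (mul_pos hs hβ) _) (rpow_pos_of_pos (hφpos y) _)
  -- Claim1: the integrand functions agree
  have hfun : ∀ i : Fin N, (fun y => ‖gradient (fun z => s * φ z ^ β) y‖ ^ (p - 2) *
      gradient (fun z => s * φ z ^ β) y i) = fun y => A y * g i y := by
    intro i
    funext y
    rw [hgw y]
    have hc := hcpos y
    have hn : ‖(s * (β * φ y ^ (β - 1))) • gradient φ y‖
        = (s * (β * φ y ^ (β - 1))) * ‖gradient φ y‖ := by
      rw [norm_smul, Real.norm_eq_abs, abs_of_pos hc]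
    rw [hn, PiLp.smul_apply, smul_eq_mul, Real.mul_rpow hc.le (norm_nonneg _)]
    have hkey : (s * (β * φ y ^ (β - 1))) ^ (p - 2) * (s * (β * φ y ^ (β - 1)))
        = A y := by
      rw [show (s * (β * φ y ^ (β - 1))) ^ (p - 2) * (s * (β * φ y ^ (β - 1)))
          = (s * (β * φ y ^ (β - 1))) ^ (p - 2) * (s * (β * φ y ^ (β - 1))) ^ (1 : ℝ) by
            rw [Real.rpow_one]]
      rw [← Real.rpow_add hc, show p - 2 + 1 = p - 1 by ring]
      rw [show s * (β * φ y ^ (β - 1)) = (s * β) * φ y ^ (β - 1) by ring,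
        Real.mul_rpow (mul_pos hs hβ).le (rpow_pos_of_pos (hφpos y) _).le,
        ← Real.rpow_mul (hφpos y).le]
    rw [← hkey]
    simp only [hg]
    ring
  -- A is differentiable
  have hAd : ∀ y, DifferentiableAt ℝ A y := by
    intro y
    exact (differentiableAt_const C).mul ((hφd y).rpow_const (Or.inl (hφpos y).ne'))
  have hfA : ∀ i : Fin N, fderiv ℝ A x (EuclideanSpace.single i 1)
      = (C * (m * φ x ^ (m - 1))) * gradient φ x i := by
    intro i
    have h1 : HasFDerivAt A (C • (m * φ x ^ (m - 1)) • fderiv ℝ φ x) x :=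
      ((hφd x).hasFDerivAt.rpow_const (Or.inl (hφpos x).ne')).const_mul C
    rw [h1.fderiv]
    simp only [ContinuousLinearMap.smul_apply, smul_eq_mul]
    rw [grad_coord]
    ring
  -- differentiability of g i at x when gradient ≠ 0
  have hgdiff : ∀ i : Fin N, gradient φ x ≠ 0 → DifferentiableAt ℝ (g i) x := by
    intro i h0
    have hn : ContDiffAt ℝ 1 (fun y => ‖gradient φ y‖) x :=
      ContDiffAt.norm ℝ (grad_contDiff φ hφ).contDiffAt h0
    have hd1 : DifferentiableAt ℝ (fun y => ‖gradient φ y‖ ^ (p - 2)) x :=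
      (hn.differentiableAt one_ne_zero).rpow_const (Or.inl (norm_ne_zero_iff.mpr h0))
    have hd2 : DifferentiableAt ℝ (fun y => gradient φ y i) x := by
      have h3 : ContDiff ℝ 1 (fun y => EuclideanSpace.proj (𝕜 := ℝ) i (gradient φ y)) :=
        (EuclideanSpace.proj (𝕜 := ℝ) i).contDiff.comp (grad_contDiff φ hφ)
      exact (h3.differentiable one_ne_zero).differentiableAt
    simp only [hg]
    exact hd1.mul hd2
  -- product rule, valid in all cases
  have hprod : ∀ i : Fin N, fderiv ℝ (fun y => A y * g i y) x (EuclideanSpace.single i 1)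
      = fderiv ℝ A x (EuclideanSpace.single i 1) * g i x
        + A x * fderiv ℝ (g i) x (EuclideanSpace.single i 1) := by
    intro i
    by_cases hgi : DifferentiableAt ℝ (g i) x
    · rw [fderiv_fun_mul (hAd x) hgi]
      simp only [ContinuousLinearMap.add_apply, ContinuousLinearMap.smul_apply, smul_eq_mul]
      ring
    · have hgrad0 : gradient φ x = 0 := by
        by_contra h
        exact hgi (hgdiff i h)
      have hgix : g i x = 0 := by
        simp [hg, hgrad0]
      have h2 : ¬ DifferentiableAt ℝ (fun y => A y * g i y) x := by
        intro h
        have h3 : DifferentiableAt ℝ (fun y => (A y)⁻¹ * (A y * g i y)) x :=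
          ((hAd x).inv (hApos x).ne').mul h
        have heq : g i = fun y => (A y)⁻¹ * (A y * g i y) :=
          funext fun y => by rw [← mul_assoc, inv_mul_cancel₀ (hApos y).ne', one_mul]
        exact hgi (heq ▸ h3)
      rw [fderiv_zero_of_not_differentiableAt h2,
        fderiv_zero_of_not_differentiableAt hgi]
      simp [hgix]
  -- assemble
  have hsum : pLaplacian p (fun y => s * φ y ^ β) x
      = (∑ i : Fin N, fderiv ℝ A x (EuclideanSpace.single i 1) * g i x)
        + A x * pLaplacian p φ x := by
    have e1 : pLaplacian p (fun y => s * φ y ^ β) x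
        = ∑ i : Fin N, (fderiv ℝ A x (EuclideanSpace.single i 1) * g i x
          + A x * fderiv ℝ (g i) x (EuclideanSpace.single i 1)) := by
      unfold pLaplacian
      refine Finset.sum_congr rfl fun i _ => ?_
      rw [hfun i]
      exact hprod i
    have e2 : pLaplacian p φ x
        = ∑ i : Fin N, fderiv ℝ (g i) x (EuclideanSpace.single i 1) := rfl
    rw [e1, Finset.sum_add_distrib, e2, Finset.mul_sum]
  have hfirst : (∑ i : Fin N, fderiv ℝ A x (EuclideanSpace.single i 1) * g i x)
      = C * m * φ x ^ (m - 1) * ‖gradient φ x‖ ^ p := by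
    have e1 : ∀ i : Fin N, fderiv ℝ A x (EuclideanSpace.single i 1) * g i x
        = (C * (m * φ x ^ (m - 1)) * ‖gradient φ x‖ ^ (p - 2))
          * (gradient φ x i * gradient φ x i) := by
      intro i
      rw [hfA i]
      simp only [hg]
      ring
    rw [Finset.sum_congr rfl (fun i _ => e1 i), ← Finset.mul_sum]
    have e2 : ∑ i : Fin N, gradient φ x i * gradient φ x i
        = ‖gradient φ x‖ ^ (2 : ℕ) := by
      rw [← real_inner_self_eq_norm_sq, PiLp.inner_apply]
      simp [RCLike.inner_apply]
      exact Finset.sum_congr rfl fun i _ => (sq _).symm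
    rw [e2]
    have e3 := norm_rpow_helper p hp (gradient φ x)
    calc C * (m * φ x ^ (m - 1)) * ‖gradient φ x‖ ^ (p - 2) * ‖gradient φ x‖ ^ (2 : ℕ)
        = C * m * φ x ^ (m - 1)
          * (‖gradient φ x‖ ^ (p - 2) * ‖gradient φ x‖ ^ (2 : ℕ)) := by ring
      _ = _ := by rw [e3]
  have hplap : pLaplacian p φ x = -(lam₁ * φ x ^ (p - 1)) := by linarith
  rw [hsum, hfirst, hplap]
  -- final algebra
  simp only [hA]
  have hden : (s * φ x ^ β) ^ γ = s ^ γ * φ x ^ (β * γ) := by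
    rw [Real.mul_rpow hs.le (rpow_pos_of_pos (hφpos x) _).le,
      ← Real.rpow_mul (hφpos x).le]
  rw [hden, eq_div_iff (mul_pos (Real.rpow_pos_of_pos hs γ) (Real.rpow_pos_of_pos (hφpos x) (β * γ))).ne']
  have E1 : φ x ^ (m - 1) * φ x ^ (β * γ) = 1 := by
    rw [← Real.rpow_add (hφpos x)]
    rw [show m - 1 + β * γ = ((β - 1) * (p - 1) - 1 + β * γ) by rw [hm]]
    rw [show β = p / (γ + p - 1) from hβdef]
    rw [show (p / (γ + p - 1) - 1) * (p - 1) - 1 + p / (γ + p - 1) * γ = 0 by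
      field_simp
      ring]
    exact Real.rpow_zero _
  have E2 : φ x ^ (p - 1) * φ x ^ m * φ x ^ (β * γ) = φ x ^ p := by
    rw [← Real.rpow_add (hφpos x), ← Real.rpow_add (hφpos x)]
    congr 1
    rw [hm, show β = p / (γ + p - 1) from hβdef]
    field_simp
    ring
  have E3 : s ^ (p - 1) * s ^ γ = s ^ (γ + p - 1) := by
    rw [← Real.rpow_add hs, show p - 1 + γ = γ + p - 1 by ring]
  have E4 : C = s ^ (p - 1) * β ^ (p - 1) := by
    rw [hC, Real.mul_rpow hs.le hβ.le]
  have E5 : -m = (γ - 1) * (p - 1) / (γ + p - 1) := by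
    rw [hm, show β = p / (γ + p - 1) from hβdef]
    field_simp
    ring
  calc -(C * m * φ x ^ (m - 1) * ‖gradient φ x‖ ^ p
        + C * φ x ^ m * -(lam₁ * φ x ^ (p - 1))) * (s ^ γ * φ x ^ (β * γ))
      = (C * s ^ γ) * ((-m) * (φ x ^ (m - 1) * φ x ^ (β * γ)) * ‖gradient φ x‖ ^ p
          + lam₁ * (φ x ^ (p - 1) * φ x ^ m * φ x ^ (β * γ))) := by ring
    _ = (C * s ^ γ) * ((-m) * ‖gradient φ x‖ ^ p + lam₁ * φ x ^ p) := by
        rw [E1, E2]; ring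
    _ = _ := by rw [E4, ← E3, E5]; ring
end
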